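/- Every quaternion algebra H = (a,b / Q) over Q contains a subfield isomorphic to an imaginary quadratic number field. Equivalently, for any nonzero a, b ∈ Q there exist r₁, r₂, r₃ ∈ Q, not all zero, with a r₁² + b r₂² − a b r₃² < 0, giving a maximal subfield Q(√(a r₁² + b r₂² − a b r₃²)) of H which is imaginary quadratic. -/

import Mathlib

open Quaternion

/-- Every quaternion algebra `H = (a,b/ℚ)` contains a subfield isomorphic to an imaginary
quadratic number field: there are `r₁, r₂, r₃ ∈ ℚ`, not all zero, with
`a r₁² + b r₂² − a b r₃² < 0`, and an element of `H` whose square is a negative rational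
(generating an imaginary quadratic maximal subfield `ℚ(√(a r₁² + b r₂² − a b r₃²))`). -/
theorem stmt15 (a b : ℚ) (ha : a ≠ 0) (hb : b ≠ 0) :
    (∃ r₁ r₂ r₃ : ℚ, ¬(r₁ = 0 ∧ r₂ = 0 ∧ r₃ = 0) ∧
        a * r₁ ^ 2 + b * r₂ ^ 2 - a * b * r₃ ^ 2 < 0) ∧
      ∃ (x : ℍ[ℚ, a, b]) (d : ℚ), d < 0 ∧ x * x = algebraMap ℚ ℍ[ℚ, a, b] d := by
  rcases lt_or_gt_of_ne ha with ha' | ha'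
  · refine ⟨⟨1, 0, 0, by simp, by simpa using ha'⟩,
      ⟨0, 1, 0, 0⟩, a, ha', ?_⟩
    ext <;> simp [QuaternionAlgebra.ext_iff, QuaternionAlgebra.re_mul,
      QuaternionAlgebra.imI_mul, QuaternionAlgebra.imJ_mul, QuaternionAlgebra.imK_mul]
  rcases lt_or_gt_of_ne hb with hb' | hb'
  · refine ⟨⟨0, 1, 0, by simp, by simpa using hb'⟩,
      ⟨0, 0, 1, 0⟩, b, hb', ?_⟩
    ext <;> simp [QuaternionAlgebra.ext_iff, QuaternionAlgebra.re_mul,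
      QuaternionAlgebra.imI_mul, QuaternionAlgebra.imJ_mul, QuaternionAlgebra.imK_mul]
  · have hab : -(a * b) < 0 := by nlinarith
    refine ⟨⟨0, 0, 1, by simp, by simpa using hab⟩,
      ⟨0, 0, 0, 1⟩, -(a * b), hab, ?_⟩
    ext <;> simp [QuaternionAlgebra.ext_iff, QuaternionAlgebra.re_mul,
      QuaternionAlgebra.imI_mul, QuaternionAlgebra.imJ_mul, QuaternionAlgebra.imK_mul]
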